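/- Consider demands partitioned into D_0 (requiring all R resource types) and D_1,…,D_R (requiring only type i), with m_i resources of type i and m = min_i m_i, zero travel times, equal start times, and infinite service times. The greedy algorithm that first serves the top m_i − m demands of each D_i with the surplus resources, and then for each of the m remaining rounds serves either the best demand of D_0 or the best remaining demand from each D_i (whichever has larger total reward), outputs the optimal total reward. -/

import Mathlib

open Finset

/-- One round per remaining resource: serve either the best demand of `D_0`
(requiring all resource types) or the best remaining demand of each `D_i`. -/
noncomputable def greedyRounds {R : ℕ} : ℕ → List ℝ → (Fin R → List ℝ) → ℝ
  | 0, _, _ => 0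
  | m + 1, L0, Ls =>
      if (∑ i : Fin R, (Ls i).headI) ≤ L0.headI then
        L0.headI + greedyRounds m L0.tail Ls
      else
        (∑ i : Fin R, (Ls i).headI) + greedyRounds m L0 (fun i => (Ls i).tail)

/-- Algorithm E: first serve the top `m_i - m` demands of each `D_i` with the
surplus resources of type `i`, then run `m` exchange-greedy rounds. -/
noncomputable def algE {R : ℕ} (m : ℕ) (mi : Fin R → ℕ)
    (L0 : List ℝ) (Ls : Fin R → List ℝ) : ℝ :=
  (∑ i : Fin R, ((Ls i).take (mi i - m)).sum) +
    greedyRounds m L0 (fun i => (Ls i).drop (mi i - m))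

lemma getD_nonneg {L : List ℝ} (hp : ∀ x ∈ L, 0 ≤ x) (n : ℕ) : 0 ≤ L.getD n 0 := by
  rw [List.getD_eq_getElem?_getD]
  rcases h : L[n]? with _ | x
  · simp
  · obtain ⟨hn, rfl⟩ := List.getElem?_eq_some_iff.mp h
    simpa using hp _ (List.getElem_mem hn)

lemma getD_tail (L : List ℝ) (n : ℕ) : L.tail.getD n 0 = L.getD (n + 1) 0 := by
  cases L <;> simp [List.getD]

lemma sum_take_succ_getD (L : List ℝ) (n : ℕ) :
    (L.take (n + 1)).sum = (L.take n).sum + L.getD n 0 := by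
  rw [List.take_succ, List.sum_append, List.getD_eq_getElem?_getD]
  rcases h : L[n]? with _ | x <;> simp [h]

lemma sum_range_getD (L : List ℝ) (n : ℕ) :
    ∑ j ∈ Finset.range n, L.getD j 0 = (L.take n).sum := by
  induction n with
  | zero => simp
  | succ n ih => rw [Finset.sum_range_succ, ih, sum_take_succ_getD]

lemma take_sum_mono {L : List ℝ} (hp : ∀ x ∈ L, 0 ≤ x) {a b : ℕ} (hab : a ≤ b) :
    (L.take a).sum ≤ (L.take b).sum := by
  rw [← sum_range_getD, ← sum_range_getD]
  exact Finset.sum_le_sum_of_subset_of_nonneg (Finset.range_subset_range.2 hab)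
    (fun j _ _ => getD_nonneg hp j)

lemma sum_take_head (L : List ℝ) (n : ℕ) :
    (L.take (n + 1)).sum = L.headI + (L.tail.take n).sum := by
  cases L <;> simp <;> rfl

lemma getD_anti {L : List ℝ} (hs : L.Pairwise (· ≥ ·)) (hp : ∀ x ∈ L, 0 ≤ x)
    {a b : ℕ} (hab : a ≤ b) : L.getD b 0 ≤ L.getD a 0 := by
  rcases lt_or_ge b L.length with hb | hb
  · have ha' : a < L.length := lt_of_le_of_lt hab hb
    rw [List.getD_eq_getElem _ _ ha', List.getD_eq_getElem _ _ hb]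
    exact hs.rel_get_of_le (by exact_mod_cast hab : (⟨a, ha'⟩ : Fin L.length) ≤ ⟨b, hb⟩)
  · rw [List.getD_eq_default _ _ hb]
    exact getD_nonneg hp a

lemma tail_take_sum_le {L : List ℝ} (hs : L.Pairwise (· ≥ ·)) (hp : ∀ x ∈ L, 0 ≤ x) (n : ℕ) :
    (L.tail.take n).sum ≤ (L.take n).sum := by
  rw [← sum_range_getD, ← sum_range_getD]
  refine Finset.sum_le_sum fun j _ => ?_
  rw [getD_tail]
  exact getD_anti hs hp (Nat.le_succ j)

lemma fin_le_strictMono {k : ℕ} {f : Fin k → ℕ} (hf : StrictMono f) (t : Fin k) :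
    (t : ℕ) ≤ f t := by
  obtain ⟨v, hv⟩ := t
  simp only [Fin.val_mk]
  induction v with
  | zero => exact Nat.zero_le _
  | succ n ih =>
      have h1 : f ⟨n, Nat.lt_of_succ_lt hv⟩ < f ⟨n + 1, hv⟩ := hf (by simp)
      have h2 := ih (Nat.lt_of_succ_lt hv)
      omega

lemma subset_sum_le {L : List ℝ} (hs : L.Pairwise (· ≥ ·)) (hp : ∀ x ∈ L, 0 ≤ x)
    (S : Finset ℕ) : ∑ j ∈ S, L.getD j 0 ≤ (L.take S.card).sum := by
  set k := S.card with hk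
  have hmono : StrictMono fun t : Fin k => ((S.orderIsoOfFin hk.symm t : ℕ)) :=
    fun a b hab => by exact_mod_cast (S.orderIsoOfFin hk.symm).strictMono hab
  have h1 : ∑ j ∈ S, L.getD j 0 = ∑ t : Fin k, L.getD (S.orderIsoOfFin hk.symm t : ℕ) 0 := by
    rw [← Finset.sum_attach S (fun j => L.getD j 0)]
    exact (Fintype.sum_equiv (S.orderIsoOfFin hk.symm).toEquiv _ _ (fun t => rfl)).symm
  rw [h1, ← sum_range_getD, ← Fin.sum_univ_eq_sum_range fun t => L.getD t 0]
  exact Finset.sum_le_sum fun t _ => getD_anti hs hp (fin_le_strictMono hmono t)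

lemma sorted_tail {L : List ℝ} (hs : L.Pairwise (· ≥ ·)) : L.tail.Pairwise (· ≥ ·) :=
  hs.sublist (List.tail_sublist L)

lemma nonneg_tail {L : List ℝ} (hp : ∀ x ∈ L, 0 ≤ x) : ∀ x ∈ L.tail, 0 ≤ x :=
  fun x hx => hp x (List.mem_of_mem_tail hx)

lemma greedy_exists {R : ℕ} (m : ℕ) (L0 : List ℝ) (Ls : Fin R → List ℝ) :
    ∃ k ≤ m, greedyRounds m L0 Ls =
      (L0.take k).sum + ∑ i : Fin R, ((Ls i).take (m - k)).sum := by
  induction m generalizing L0 Ls with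
  | zero => exact ⟨0, le_rfl, by simp [greedyRounds]⟩
  | succ m ih =>
      rw [greedyRounds]
      split_ifs with h
      · obtain ⟨k, hk, heq⟩ := ih L0.tail Ls
        refine ⟨k + 1, by omega, ?_⟩
        rw [heq, sum_take_head L0 k]
        have : m + 1 - (k + 1) = m - k := by omega
        rw [this]; ring
      · obtain ⟨k, hk, heq⟩ := ih L0 (fun i => (Ls i).tail)
        refine ⟨k, by omega, ?_⟩
        rw [heq]
        have h2 : m + 1 - k = (m - k) + 1 := by omega
        rw [h2]
        simp_rw [sum_take_head]
        rw [Finset.sum_add_distrib]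
        ring

lemma greedy_ge {R : ℕ} (m : ℕ) (L0 : List ℝ) (Ls : Fin R → List ℝ)
    (h0s : L0.Pairwise (· ≥ ·)) (hss : ∀ i, (Ls i).Pairwise (· ≥ ·))
    (h0p : ∀ x ∈ L0, 0 ≤ x) (hps : ∀ i, ∀ x ∈ Ls i, 0 ≤ x) :
    ∀ k ≤ m, (L0.take k).sum + ∑ i : Fin R, ((Ls i).take (m - k)).sum
      ≤ greedyRounds m L0 Ls := by
  induction m generalizing L0 Ls with
  | zero =>
      intro k hk
      interval_cases k
      simp [greedyRounds]
  | succ m ih =>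
      intro k hk
      rw [greedyRounds]
      split_ifs with h
      · rcases Nat.eq_zero_or_pos k with rfl | hk0
        · have step : ∑ i : Fin R, ((Ls i).take (m + 1)).sum
              ≤ (∑ i : Fin R, (Ls i).headI) + ∑ i : Fin R, ((Ls i).take m).sum := by
            rw [← Finset.sum_add_distrib]
            refine Finset.sum_le_sum fun i _ => ?_
            rw [sum_take_head]
            exact add_le_add (le_refl _) (tail_take_sum_le (hss i) (hps i) m)
          have ihh := ih L0.tail Ls (sorted_tail h0s) hss (nonneg_tail h0p) hps 0 (Nat.zero_le m)
          simp only [List.take_zero, List.sum_nil, zero_add, Nat.sub_zero] at ihh ⊢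
          calc ∑ i : Fin R, ((Ls i).take (m + 1)).sum
              ≤ (∑ i : Fin R, (Ls i).headI) + ∑ i : Fin R, ((Ls i).take m).sum := step
            _ ≤ L0.headI + ∑ i : Fin R, ((Ls i).take m).sum := by linarith
            _ ≤ L0.headI + greedyRounds m L0.tail Ls := by linarith
        · obtain ⟨k', rfl⟩ : ∃ k', k = k' + 1 := ⟨k - 1, by omega⟩
          have ihh := ih L0.tail Ls (sorted_tail h0s) hss (nonneg_tail h0p) hps k' (by omega)
          rw [sum_take_head L0 k']
          have : m + 1 - (k' + 1) = m - k' := by omega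
          rw [this]
          linarith
      · push_neg at h
        rcases Nat.lt_or_ge k (m + 1) with hk1 | hk1
        · have hk' : k ≤ m := by omega
          have ihh := ih L0 (fun i => (Ls i).tail) h0s (fun i => sorted_tail (hss i))
            h0p (fun i => nonneg_tail (hps i)) k hk'
          have h2 : m + 1 - k = (m - k) + 1 := by omega
          rw [h2]
          have step : ∑ i : Fin R, ((Ls i).take (m - k + 1)).sum
              = (∑ i : Fin R, (Ls i).headI) + ∑ i : Fin R, ((Ls i).tail.take (m - k)).sum := by
            rw [← Finset.sum_add_distrib]
            exact Finset.sum_congr rfl fun i _ => sum_take_head _ _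
          rw [step]
          linarith
        · have hkm : k = m + 1 := by omega
          subst hkm
          have ihh := ih L0 (fun i => (Ls i).tail) h0s (fun i => sorted_tail (hss i))
            h0p (fun i => nonneg_tail (hps i)) m le_rfl
          simp only [Nat.sub_self, List.take_zero, List.sum_nil, Finset.sum_const_zero,
            add_zero] at ihh ⊢
          rw [sum_take_head L0 m]
          have := tail_take_sum_le h0s h0p m
          linarith

lemma sum_take_add (L : List ℝ) (a b : ℕ) :
    (L.take (a + b)).sum = (L.take a).sum + ((L.drop a).take b).sum := by
  rw [List.take_add, List.sum_append]

lemma take_min_sum (L : List ℝ) (n : ℕ) :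
    (L.take (min n L.length)).sum = (L.take n).sum := by
  rcases le_total n L.length with h | h
  · rw [min_eq_left h]
  · rw [min_eq_right h, List.take_length, List.take_of_length_le h]

/-- In the special case `mR{1 or all}D` with zero travel times, common start
times and infinite service times (so each resource serves exactly one demand),
Algorithm E outputs the optimal total reward: its output is the greatest
reward achievable by a feasible assignment, i.e. by choosing `S_0 ⊆ D_0` and
`S_i ⊆ D_i` with `|S_0| + |S_i| ≤ m_i` for every `i`. -/
theorem algE_optimal {R : ℕ} (hR : 0 < R) (mi : Fin R → ℕ) (m : ℕ)
    (hm_le : ∀ i, m ≤ mi i) (hm_min : ∃ i, mi i = m)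
    (L0 : List ℝ) (Ls : Fin R → List ℝ)
    (h0sorted : L0.Pairwise (· ≥ ·)) (hsorted : ∀ i, (Ls i).Pairwise (· ≥ ·))
    (h0pos : ∀ x ∈ L0, 0 ≤ x) (hpos : ∀ i, ∀ x ∈ Ls i, 0 ≤ x) :
    IsGreatest
      {v : ℝ | ∃ (S0 : Finset ℕ) (Si : Fin R → Finset ℕ),
        (∀ j ∈ S0, j < L0.length) ∧
        (∀ i, ∀ j ∈ Si i, j < (Ls i).length) ∧
        (∀ i, S0.card + (Si i).card ≤ mi i) ∧
        v = (∑ j ∈ S0, L0.getD j 0) +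
              ∑ i : Fin R, ∑ j ∈ Si i, (Ls i).getD j 0}
      (algE m mi L0 Ls) := by
  have hsorted' : ∀ i, ((Ls i).drop (mi i - m)).Pairwise (· ≥ ·) :=
    fun i => (hsorted i).sublist (List.drop_sublist _ _)
  have hpos' : ∀ i, ∀ x ∈ (Ls i).drop (mi i - m), 0 ≤ x :=
    fun i x hx => hpos i x ((List.drop_sublist _ _).subset hx)
  have key : ∀ i (k : ℕ), k ≤ m →
      ((Ls i).take (mi i - k)).sum =
        ((Ls i).take (mi i - m)).sum + (((Ls i).drop (mi i - m)).take (m - k)).sum := by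
    intro i k hk
    have : mi i - k = (mi i - m) + (m - k) := by have := hm_le i; omega
    rw [this, sum_take_add]
  constructor
  · -- membership
    obtain ⟨k, hk, heq⟩ := greedy_exists m L0 (fun i => (Ls i).drop (mi i - m))
    refine ⟨Finset.range (min k L0.length),
      fun i => Finset.range (min (mi i - k) (Ls i).length), ?_, ?_, ?_, ?_⟩
    · intro j hj; rw [Finset.mem_range] at hj; omega
    · intro i j hj; rw [Finset.mem_range] at hj; omega
    · intro i
      simp only [Finset.card_range]
      have := hm_le i
      omega
    · have e0 : ∑ j ∈ Finset.range (min k L0.length), L0.getD j 0 = (L0.take k).sum := by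
        rw [sum_range_getD, take_min_sum]
      have ei : ∀ i : Fin R, ∑ j ∈ Finset.range (min (mi i - k) (Ls i).length),
          (Ls i).getD j 0 = ((Ls i).take (mi i - k)).sum := by
        intro i; rw [sum_range_getD, take_min_sum]
      rw [e0]
      rw [Finset.sum_congr rfl fun i _ => ei i]
      unfold algE
      rw [heq]
      rw [Finset.sum_congr rfl fun i (_ : i ∈ Finset.univ) => key i k hk]
      rw [Finset.sum_add_distrib]
      ring
  · -- upper bound
    rintro v ⟨S0, Si, hS0, hSi, hcard, rfl⟩
    obtain ⟨j₀, hj₀⟩ := hm_min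
    have hkm : S0.card ≤ m := by have := hcard j₀; omega
    have hb0 : ∑ j ∈ S0, L0.getD j 0 ≤ (L0.take S0.card).sum :=
      subset_sum_le h0sorted h0pos S0
    have hbi : ∀ i : Fin R, ∑ j ∈ Si i, (Ls i).getD j 0 ≤ ((Ls i).take (mi i - S0.card)).sum := by
      intro i
      refine le_trans (subset_sum_le (hsorted i) (hpos i) (Si i)) ?_
      exact take_sum_mono (hpos i) (by have := hcard i; omega)
    have hg := greedy_ge m L0 (fun i => (Ls i).drop (mi i - m)) h0sorted hsorted'
      h0pos hpos' S0.card hkm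
    unfold algE
    calc (∑ j ∈ S0, L0.getD j 0) + ∑ i : Fin R, ∑ j ∈ Si i, (Ls i).getD j 0
        ≤ (L0.take S0.card).sum + ∑ i : Fin R, ((Ls i).take (mi i - S0.card)).sum :=
          add_le_add hb0 (Finset.sum_le_sum fun i _ => hbi i)
      _ = (L0.take S0.card).sum + ∑ i : Fin R, (((Ls i).take (mi i - m)).sum
            + (((Ls i).drop (mi i - m)).take (m - S0.card)).sum) := by
          rw [Finset.sum_congr rfl fun i _ => key i S0.card hkm]
      _ = (∑ i : Fin R, ((Ls i).take (mi i - m)).sum) +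
            ((L0.take S0.card).sum +
              ∑ i : Fin R, (((Ls i).drop (mi i - m)).take (m - S0.card)).sum) := by
          rw [Finset.sum_add_distrib]; ring
      _ ≤ (∑ i : Fin R, ((Ls i).take (mi i - m)).sum) +
            greedyRounds m L0 (fun i => (Ls i).drop (mi i - m)) := by
          exact add_le_add (le_refl _) hg
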